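/- For every real number x with 0 < x < π, one has 1/tan(x) ≤ 1/x − x/3, i.e. cot x ≤ 1/x − x/3. -/

import Mathlib

open Real

private lemma f1_hasDeriv (t : ℝ) :
    HasDerivAt (fun t => Real.sin t - t * Real.cos t) (t * Real.sin t) t := by
  have h := (Real.hasDerivAt_sin t).sub ((hasDerivAt_id t).mul (Real.hasDerivAt_cos t))
  refine h.congr_deriv ?_; simp [id_eq, mul_comm]

private lemma f1_nonneg : ∀ y ∈ Set.Icc (0:ℝ) π, 0 ≤ Real.sin y - y * Real.cos y := by
  intro y hy
  have mono : MonotoneOn (fun t => Real.sin t - t * Real.cos t) (Set.Icc 0 π) := by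
    apply monotoneOn_of_deriv_nonneg (convex_Icc 0 π)
    · exact fun t _ => ((f1_hasDeriv t).continuousAt).continuousWithinAt
    · intro t ht
      exact ((f1_hasDeriv t).differentiableAt).differentiableWithinAt
    · intro t ht
      rw [interior_Icc] at ht
      rw [(f1_hasDeriv t).deriv]
      exact mul_nonneg ht.1.le (Real.sin_nonneg_of_nonneg_of_le_pi ht.1.le ht.2.le)
  have := mono (Set.left_mem_Icc.2 Real.pi_pos.le) hy hy.1
  simpa using this

private lemma h_hasDeriv (t : ℝ) :
    HasDerivAt (fun t => (3 - t^2) * Real.sin t - 3 * t * Real.cos t)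
      (t * (Real.sin t - t * Real.cos t)) t := by
  have h := (((hasDerivAt_const t (3:ℝ)).sub (hasDerivAt_pow 2 t)).mul (Real.hasDerivAt_sin t)).sub
    (((hasDerivAt_const t (3:ℝ)).mul (hasDerivAt_id t)).mul (Real.hasDerivAt_cos t))
  refine h.congr_deriv ?_; simp [id_eq]; ring

private lemma h_nonneg : ∀ y ∈ Set.Icc (0:ℝ) π,
    0 ≤ (3 - y^2) * Real.sin y - 3 * y * Real.cos y := by
  intro y hy
  have mono : MonotoneOn (fun t => (3 - t^2) * Real.sin t - 3 * t * Real.cos t) (Set.Icc 0 π) := by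
    apply monotoneOn_of_deriv_nonneg (convex_Icc 0 π)
    · exact fun t _ => ((h_hasDeriv t).continuousAt).continuousWithinAt
    · intro t ht
      exact ((h_hasDeriv t).differentiableAt).differentiableWithinAt
    · intro t ht
      rw [interior_Icc] at ht
      rw [(h_hasDeriv t).deriv]
      exact mul_nonneg ht.1.le (f1_nonneg t ⟨ht.1.le, ht.2.le⟩)
  have := mono (Set.left_mem_Icc.2 Real.pi_pos.le) hy hy.1
  simpa using this

/-- For `0 < x < π`, one has `cot x = 1/tan x ≤ 1/x - x/3`. -/
theorem one_div_tan_le (x : ℝ) (h0 : 0 < x) (h1 : x < π) :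
    1 / Real.tan x ≤ 1 / x - x / 3 := by
  have hs : 0 < Real.sin x := Real.sin_pos_of_pos_of_lt_pi h0 h1
  have key : 0 ≤ (3 - x^2) * Real.sin x - 3 * x * Real.cos x :=
    h_nonneg x ⟨h0.le, h1.le⟩
  have htan : 1 / Real.tan x = Real.cos x / Real.sin x := by
    rw [Real.tan_eq_sin_div_cos, one_div_div]
  have hrw : 1 / x - x / 3 = (3 - x^2) / (3*x) := by field_simp
  rw [htan, hrw, div_le_div_iff₀ hs (by positivity)]
  nlinarith [key]
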